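/- Let G be a finite group, A a C*-algebra with an action α of G, and for an ideal I ⊆ A and a subset S ⊆ G containing 1, define I_S = Σ_{g∈G} α_g(⋂_{h∈S} α_h(I)) and I_S⁻ = Σ_{g∈G∖S} I_{S∪{g}} (with I_G⁻ = 0). If L ⊆ M are ideals of A such that (I_S ∩ L) + I_S⁻ = (I_S ∩ M) + I_S⁻ for every subset S ⊆ G containing 1, then I_{{1}} ∩ L = I_{{1}} ∩ M. -/

import Mathlib

open scoped BigOperators

variable {G : Type*} [Group G] [Fintype G] {A : Type*} [NonUnitalCStarAlgebra A]

/-- Approximate unit lemma: for `x` in a two-sided ideal `M` of a C*-algebra,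
there is `u ∈ M` with `u * x` close to `x`. -/
lemma approx_unit (M : TwoSidedIdeal A) {x : A} (hx : x ∈ M) {ε : ℝ} (hε : 0 < ε) :
    ∃ u ∈ M, ‖u * x - x‖ < ε := by
  set c : ℝ := ε ^ 4 with hc
  have hc0 : (0:ℝ) < c := by positivity
  set b : A := x * star x with hbdef
  have hb : IsSelfAdjoint b := .mul_star_self x
  have hbM : b ∈ M := M.mul_mem_right x (star x) hx
  set g : ℝ → ℝ := fun t => t / (c + t ^ 2) with hgdef
  have hgc : Continuous g := by
    apply continuous_id.div (by continuity)
    intro t; positivity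
  have hg0 : g 0 = 0 := by simp [hgdef]
  set f : ℝ → ℝ := fun t => t * g t with hfdef
  have hfc : Continuous f := continuous_id.mul hgc
  have hf0 : f 0 = 0 := by simp [hfdef, hg0]
  set u : A := cfcₙ f b with hudef
  have huM : u ∈ M := by
    have : u = b * cfcₙ g b := by
      rw [hudef, cfcₙ_mul (fun t : ℝ => t) g b (continuous_id.continuousOn) rfl
        hgc.continuousOn hg0, cfcₙ_id' ℝ b]
    rw [this]
    exact M.mul_mem_right b _ hbM
  have hu : IsSelfAdjoint u := cfcₙ_predicate f b
  refine ⟨u, huM, ?_⟩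
  set y : A := u * x - x with hydef
  have key : y * star y = u * b * u - u * b - (b * u - b) := by
    rw [hydef, star_sub, star_mul, hu.star_eq, hbdef]
    noncomm_ring
  -- express as cfcₙ
  have h1c : Continuous (fun t : ℝ => f t * t) := hfc.mul continuous_id
  have h10 : (fun t : ℝ => f t * t) 0 = 0 := by simp [hf0]
  have A1 : cfcₙ (fun t : ℝ => f t * t) b = u * b := by
    rw [cfcₙ_mul f (fun t : ℝ => t) b hfc.continuousOn hf0 continuous_id.continuousOn rfl,
      cfcₙ_id' ℝ b]
  have A2 : cfcₙ (fun t : ℝ => t * f t - t) b = b * u - b := by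
    rw [cfcₙ_sub (fun t : ℝ => t * f t) (fun t : ℝ => t) b
      (continuous_id.mul hfc).continuousOn (by simp [hf0]) continuous_id.continuousOn rfl,
      cfcₙ_mul (fun t : ℝ => t) f b continuous_id.continuousOn rfl hfc.continuousOn hf0,
      cfcₙ_id' ℝ b]
  have A3 : cfcₙ (fun t : ℝ => f t * t * f t) b = u * b * u := by
    rw [cfcₙ_mul (fun t : ℝ => f t * t) f b h1c.continuousOn h10 hfc.continuousOn hf0, A1]
  have A4 : cfcₙ (fun t : ℝ => (f t * t * f t - f t * t) - (t * f t - t)) b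
      = u * b * u - u * b - (b * u - b) := by
    rw [cfcₙ_sub (fun t : ℝ => f t * t * f t - f t * t) (fun t : ℝ => t * f t - t) b
      ((h1c.mul hfc).sub h1c).continuousOn (by simp [hf0])
      ((continuous_id.mul hfc).sub continuous_id).continuousOn (by simp [hf0]),
      cfcₙ_sub (fun t : ℝ => f t * t * f t) (fun t : ℝ => f t * t) b
      (h1c.mul hfc).continuousOn (by simp [hf0]) h1c.continuousOn h10,
      A1, A2, A3]
  -- norm bound
  have hbound : ∀ t : ℝ, |f t * t * f t - f t * t - (t * f t - t)| ≤ ε ^ 2 / 2 := by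
    intro t
    have hd : (0:ℝ) < c + t ^ 2 := by positivity
    have heq : f t * t * f t - f t * t - (t * f t - t) = t * c ^ 2 / (c + t ^ 2) ^ 2 := by
      simp only [hfdef, hgdef]
      field_simp
      ring
    rw [heq, abs_div, abs_of_pos (by positivity : (0:ℝ) < (c + t ^ 2) ^ 2),
      div_le_iff₀ (by positivity)]
    have habs : |t * c ^ 2| = |t| * c ^ 2 := by
      rw [abs_mul, abs_of_pos (by positivity : (0:ℝ) < c ^ 2)]
    rw [habs]
    have h1 : 2 * ε ^ 2 * |t| ≤ c + t ^ 2 := by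
      have heq2 : (ε ^ 2 - |t|) ^ 2 = ε ^ 4 - 2 * ε ^ 2 * |t| + t ^ 2 := by
        rw [sub_sq, sq_abs]; ring
      have h' : 0 ≤ ε ^ 4 - 2 * ε ^ 2 * |t| + t ^ 2 := heq2 ▸ sq_nonneg _
      rw [hc]; linarith
    have h2 : c ≤ c + t ^ 2 := le_add_of_nonneg_right (sq_nonneg t)
    have h3 : (2 * ε ^ 2 * |t|) * c ≤ (c + t ^ 2) * (c + t ^ 2) :=
      mul_le_mul h1 h2 hc0.le hd.le
    have h4 : ε ^ 2 / 2 * ((2 * ε ^ 2 * |t|) * c) ≤ ε ^ 2 / 2 * ((c + t ^ 2) * (c + t ^ 2)) :=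
      mul_le_mul_of_nonneg_left h3 (by positivity)
    have h5 : ε ^ 2 / 2 * ((2 * ε ^ 2 * |t|) * c) = |t| * c ^ 2 := by rw [hc]; ring
    have h6 : (c + t ^ 2) ^ 2 = (c + t ^ 2) * (c + t ^ 2) := pow_two (c + t ^ 2)
    linarith
  have hnorm : ‖y * star y‖ ≤ ε ^ 2 / 2 := by
    rw [key, ← A4]
    exact norm_cfcₙ_le fun t _ => (by rw [Real.norm_eq_abs]; exact hbound t)
  have hyy : ‖y‖ * ‖y‖ ≤ ε ^ 2 / 2 := by rwa [CStarRing.norm_self_mul_star] at hnorm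
  by_contra hcon
  push_neg at hcon
  have h7 : ε * ε ≤ ‖y‖ * ‖y‖ := mul_le_mul hcon hcon hε.le (norm_nonneg y)
  have h8 : (0:ℝ) < ε * ε := by positivity
  have h9 : ε ^ 2 = ε * ε := pow_two ε
  linarith



/-- The "ideal quotient" `{z | M * z ⊆ L}`; it is a two-sided ideal. -/
def quotIdeal (M L : TwoSidedIdeal A) : TwoSidedIdeal A :=
  TwoSidedIdeal.mk' {z | ∀ m ∈ M, m * z ∈ L}
    (fun m _ => by simpa using L.zero_mem)
    (fun {x y} hx hy m hm => by
      simpa [mul_add] using L.add_mem (hx m hm) (hy m hm))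
    (fun {x} hx m hm => by simpa using L.neg_mem (hx m hm))
    (fun {x y} hy m hm => by
      rw [← mul_assoc]; exact hy (m * x) (M.mul_mem_right m x hm))
    (fun {x y} hx m hm => by
      rw [← mul_assoc]; exact L.mul_mem_right (m * x) y (hx m hm))

lemma mem_quotIdeal {M L : TwoSidedIdeal A} {z : A} :
    z ∈ quotIdeal M L ↔ ∀ m ∈ M, m * z ∈ L := by
  rw [quotIdeal, TwoSidedIdeal.mem_mk']; rfl

/-- If `x ∈ M`, `x ∈ quotIdeal M L`, and `L` is closed, then `x ∈ L`. -/
lemma mem_of_mem_quotIdeal {M L : TwoSidedIdeal A} (hLc : IsClosed (L : Set A))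
    {x : A} (hxM : x ∈ M) (hxq : x ∈ quotIdeal M L) : x ∈ L := by
  have : x ∈ closure (L : Set A) := by
    rw [Metric.mem_closure_iff]
    intro ε hε
    obtain ⟨u, huM, hu⟩ := approx_unit M hxM hε
    exact ⟨u * x, (mem_quotIdeal.mp hxq) u huM, by
      rwa [dist_eq_norm, ← norm_neg, neg_sub]⟩
  rwa [hLc.closure_eq] at this

/-- The image of a two-sided ideal under a *-algebra automorphism. -/
def idealMap (e : A ≃⋆ₐ[ℂ] A) (I : TwoSidedIdeal A) : TwoSidedIdeal A :=
  TwoSidedIdeal.comap e.symm I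

/-- `I_S = Σ_{g ∈ G} α_g (⋂_{h ∈ S} α_h(I))`. -/
def idealIS (α : G → A ≃⋆ₐ[ℂ] A) (I : TwoSidedIdeal A) (S : Set G) : TwoSidedIdeal A :=
  ⨆ g : G, idealMap (α g) (⨅ h ∈ S, idealMap (α h) I)

/-- `I_S⁻ = Σ_{g ∈ G \ S} I_{S ∪ {g}}` (so `I_G⁻ = 0`). -/
def idealISm (α : G → A ≃⋆ₐ[ℂ] A) (I : TwoSidedIdeal A) (S : Set G) : TwoSidedIdeal A :=
  ⨆ g ∈ Sᶜ, idealIS α I (insert g S)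

/-- Lemma on matching ideals: if `L ≤ M` and `(I_S ⊓ L) ⊔ I_S⁻ = (I_S ⊓ M) ⊔ I_S⁻`
for all `S ⊆ G` with `1 ∈ S`, then `I_{{1}} ⊓ L = I_{{1}} ⊓ M`. -/
theorem stmt2 (α : G → A ≃⋆ₐ[ℂ] A) (hα1 : α 1 = StarAlgEquiv.refl ℂ A)
    (hαmul : ∀ g h : G, α (g * h) = (α h).trans (α g))
    (I L M : TwoSidedIdeal A)
    (hIc : IsClosed (I : Set A)) (hLc : IsClosed (L : Set A)) (hMc : IsClosed (M : Set A))
    (hLM : L ≤ M)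
    (h : ∀ S : Set G, (1 : G) ∈ S →
      (idealIS α I S ⊓ L) ⊔ idealISm α I S = (idealIS α I S ⊓ M) ⊔ idealISm α I S) :
    idealIS α I {1} ⊓ L = idealIS α I {1} ⊓ M := by
  have key : ∀ n : ℕ, ∀ S : Set G, Sᶜ.ncard ≤ n → (1 : G) ∈ S →
      idealIS α I S ⊓ M ≤ L := by
    intro n
    induction n with
    | zero =>
      intro S hcard hS x hx
      have hSc : Sᶜ = (∅ : Set G) := by
        have := Set.ncard_eq_zero (Set.toFinite Sᶜ) |>.mp (Nat.le_zero.mp hcard)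
        exact this
      have hm : idealISm α I S = ⊥ := by
        simp [idealISm, hSc]
      have h' := h S hS
      rw [hm, sup_bot_eq, sup_bot_eq] at h'
      rw [← h'] at hx
      exact ((TwoSidedIdeal.mem_inf A).mp hx).2
    | succ n IH =>
      intro S hcard hS x hx
      obtain ⟨hxI, hxM⟩ := (TwoSidedIdeal.mem_inf A).mp hx
      have hx' : x ∈ (idealIS α I S ⊓ L) ⊔ idealISm α I S := by
        rw [h S hS]
        exact TwoSidedIdeal.mem_sup_left hx
      rw [TwoSidedIdeal.mem_sup] at hx'
      obtain ⟨y, hy, z, hz, hyz⟩ := hx'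
      have hyL : y ∈ L := ((TwoSidedIdeal.mem_inf A).mp hy).2
      have hzM : z ∈ M := by
        have : z = x - y := by rw [← hyz, add_sub_cancel_left]
        rw [this]
        exact M.sub_mem hxM (hLM hyL)
      -- `z` lies in the quotient ideal
      have hsub : idealISm α I S ≤ quotIdeal M L := by
        refine iSup_le fun g => iSup_le fun hg => ?_
        have hcard' : (insert g S)ᶜ.ncard ≤ n := by
          have hci : (insert g S)ᶜ = Sᶜ \ {g} := by
            ext a; simp [Set.mem_insert_iff, not_or, and_comm]
          rw [hci]
          have h1 : (Sᶜ \ {g}).ncard = Sᶜ.ncard - 1 :=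
            Set.ncard_diff_singleton_of_mem hg
          have h2 : 1 ≤ Sᶜ.ncard := (Set.ncard_pos (Set.toFinite Sᶜ)).mpr ⟨g, hg⟩
          omega
        intro w hw
        rw [mem_quotIdeal]
        intro m hm
        have hmw : m * w ∈ idealIS α I (insert g S) ⊓ M :=
          (TwoSidedIdeal.mem_inf A).mpr
            ⟨(idealIS α I (insert g S)).mul_mem_left m w hw, M.mul_mem_right m w hm⟩
        exact IH (insert g S) hcard' (Set.mem_insert_iff.mpr (Or.inr hS)) hmw
      have hzL : z ∈ L := mem_of_mem_quotIdeal hLc hzM (hsub hz)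
      rw [← hyz]
      exact L.add_mem hyL hzL
  refine le_antisymm (inf_le_inf_left _ hLM) (le_inf inf_le_left ?_)
  exact key (({1} : Set G)ᶜ.ncard) {1} le_rfl rfl
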